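/- Let |ψ^i⟩_{AB} be mutually orthogonal unit vectors and {p_i} a probability distribution, and set ρ_{AB} = Σ_i p_i |ψ^i⟩⟨ψ^i|. Then ρ_{ABE'} = Σ_i p_i |ψ^i⟩⟨ψ^i| ⊗ |i⟩⟨i|_{E'}, with {|i⟩} orthonormal in H_{E'}, is an extension of ρ_{AB} satisfying (1/2) I(A:B|E') = Σ_i p_i S(ρ_A^i), where ρ_A^i = Tr_B |ψ^i⟩⟨ψ^i|. Consequently E_sq(A:B)(ρ_{AB}) ≤ Σ_i p_i S(ρ_A^i). -/

import Mathlib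

open scoped BigOperators ComplexOrder

noncomputable section

namespace QP

/-- Von Neumann entropy of a (Hermitian) matrix, via its eigenvalues. -/
noncomputable def entropy {n : Type*} [Fintype n] [DecidableEq n] (ρ : Matrix n n ℂ) : ℝ :=
  if h : ρ.IsHermitian then -∑ i, (h.eigenvalues i) * Real.log (h.eigenvalues i) else 0

/-- A density operator: positive semidefinite with unit trace. -/
def IsState {n : Type*} [Fintype n] (ρ : Matrix n n ℂ) : Prop :=
  ρ.PosSemidef ∧ ρ.trace = 1

variable {A B C D : Type*} [Fintype A] [Fintype B] [Fintype C] [Fintype D]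

/-- Partial trace over the second tensor factor. -/
def ptraceR (ρ : Matrix (A × B) (A × B) ℂ) : Matrix A A ℂ :=
  Matrix.of fun a a' => ∑ b, ρ (a, b) (a', b)

/-- Partial trace over the first tensor factor. -/
def ptraceL (ρ : Matrix (A × B) (A × B) ℂ) : Matrix B B ℂ :=
  Matrix.of fun b b' => ∑ a, ρ (a, b) (a, b')

/-- Reduced state on `A × C` of a tripartite state on `A × B × C`. -/
def redAC (ρ : Matrix (A × B × C) (A × B × C) ℂ) : Matrix (A × C) (A × C) ℂ :=
  Matrix.of fun x y => ∑ b, ρ (x.1, b, x.2) (y.1, b, y.2)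

/-- Reduced state on `B × C`. -/
def redBC (ρ : Matrix (A × B × C) (A × B × C) ℂ) : Matrix (B × C) (B × C) ℂ :=
  Matrix.of fun x y => ∑ a, ρ (a, x.1, x.2) (a, y.1, y.2)

/-- Reduced state on `A × B`. -/
def redAB (ρ : Matrix (A × B × C) (A × B × C) ℂ) : Matrix (A × B) (A × B) ℂ :=
  Matrix.of fun x y => ∑ c, ρ (x.1, x.2, c) (y.1, y.2, c)

/-- Reduced state on `C`. -/
def redC (ρ : Matrix (A × B × C) (A × B × C) ℂ) : Matrix C C ℂ :=
  Matrix.of fun c c' => ∑ a, ∑ b, ρ (a, b, c) (a, b, c')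

/-- Quantum conditional mutual information `I(A:B|C)`. -/
noncomputable def cmi [DecidableEq A] [DecidableEq B] [DecidableEq C]
    (ρ : Matrix (A × B × C) (A × B × C) ℂ) : ℝ :=
  entropy (redAC ρ) + entropy (redBC ρ) - entropy ρ - entropy (redC ρ)

/-- Quantum mutual information `I(A:B)`. -/
noncomputable def mutInfo [DecidableEq A] [DecidableEq B]
    (ρ : Matrix (A × B) (A × B) ℂ) : ℝ :=
  entropy (ptraceR ρ) + entropy (ptraceL ρ) - entropy ρ

/-- Squashed entanglement: infimum of `I(A:B|E')/2` over finite-dimensional extensions. -/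
noncomputable def Esq [DecidableEq A] [DecidableEq B] (ρ : Matrix (A × B) (A × B) ℂ) : ℝ :=
  sInf { x : ℝ | ∃ (n : ℕ) (σ : Matrix (A × B × Fin n) (A × B × Fin n) ℂ),
    IsState σ ∧ redAB σ = ρ ∧ x = cmi σ / 2 }

/-- Puffed entanglement: supremum of `I(A:B|E')/2` over finite-dimensional extensions. -/
noncomputable def Epu [DecidableEq A] [DecidableEq B] (ρ : Matrix (A × B) (A × B) ℂ) : ℝ :=
  sSup { x : ℝ | ∃ (n : ℕ) (σ : Matrix (A × B × Fin n) (A × B × Fin n) ℂ),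
    IsState σ ∧ redAB σ = ρ ∧ x = cmi σ / 2 }

/-- Rank-one projector `|ψ⟩⟨ψ|`. -/
def outer {n : Type*} (ψ : n → ℂ) : Matrix n n ℂ :=
  Matrix.of fun x y => ψ x * star (ψ y)

/-- `ψ` is a unit vector. -/
def IsUnitVec {n : Type*} [Fintype n] (ψ : n → ℂ) : Prop :=
  ∑ x, Complex.normSq (ψ x) = 1

/-- Four-partite reductions (system order `A × B × D × C`, with `D` playing `A'`). -/
def r4AC (ρ : Matrix (A × B × D × C) (A × B × D × C) ℂ) : Matrix (A × C) (A × C) ℂ :=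
  Matrix.of fun x y => ∑ b, ∑ d, ρ (x.1, b, d, x.2) (y.1, b, d, y.2)

def r4BC (ρ : Matrix (A × B × D × C) (A × B × D × C) ℂ) : Matrix (B × C) (B × C) ℂ :=
  Matrix.of fun x y => ∑ a, ∑ d, ρ (a, x.1, d, x.2) (a, y.1, d, y.2)

def r4ABC (ρ : Matrix (A × B × D × C) (A × B × D × C) ℂ) : Matrix (A × B × C) (A × B × C) ℂ :=
  Matrix.of fun x y => ∑ d, ρ (x.1, x.2.1, d, x.2.2) (y.1, y.2.1, d, y.2.2)

def r4C (ρ : Matrix (A × B × D × C) (A × B × D × C) ℂ) : Matrix C C ℂ :=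
  Matrix.of fun c c' => ∑ a, ∑ b, ∑ d, ρ (a, b, d, c) (a, b, d, c')

def r4A (ρ : Matrix (A × B × D × C) (A × B × D × C) ℂ) : Matrix A A ℂ :=
  Matrix.of fun a a' => ∑ b, ∑ d, ∑ c, ρ (a, b, d, c) (a', b, d, c)

def r4D (ρ : Matrix (A × B × D × C) (A × B × D × C) ℂ) : Matrix D D ℂ :=
  Matrix.of fun d d' => ∑ a, ∑ b, ∑ c, ρ (a, b, d, c) (a, b, d', c)

def r4AD (ρ : Matrix (A × B × D × C) (A × B × D × C) ℂ) : Matrix (A × D) (A × D) ℂ :=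
  Matrix.of fun x y => ∑ b, ∑ c, ρ (x.1, b, x.2, c) (y.1, b, y.2, c)

def r4DC (ρ : Matrix (A × B × D × C) (A × B × D × C) ℂ) : Matrix (D × C) (D × C) ℂ :=
  Matrix.of fun x y => ∑ a, ∑ b, ρ (a, b, x.1, x.2) (a, b, y.1, y.2)

/-- `I(A:B|C)` for a four-partite state on `A × B × D × C`, conditioning on the last factor. -/
noncomputable def cmi4 [DecidableEq A] [DecidableEq B] [DecidableEq C] [DecidableEq D]
    (ρ : Matrix (A × B × D × C) (A × B × D × C) ℂ) : ℝ :=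
  entropy (r4AC ρ) + entropy (r4BC ρ) - entropy (r4ABC ρ) - entropy (r4C ρ)

end QP

open QP


open Polynomial Matrix Finset

namespace QPaux

variable {m n : Type*} [Fintype m] [Fintype n] [DecidableEq m] [DecidableEq n]

abbrev K := FractionRing (Polynomial ℂ)

lemma charmatrix_map_frac (P : Matrix m m ℂ) :
    (charmatrix P).map (algebraMap (Polynomial ℂ) K) =
      (algebraMap (Polynomial ℂ) K X) • (1 : Matrix m m K)
        - P.map ((algebraMap (Polynomial ℂ) K).comp Polynomial.C) := by
  ext i j
  by_cases h : i = j
  · subst h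
    simp [charmatrix_apply_eq, Matrix.map_apply, Matrix.sub_apply, Matrix.smul_apply,
      Matrix.one_apply_eq, smul_eq_mul, mul_one, Algebra.algebraMap_eq_smul_one, sub_smul]
  · simp [charmatrix_apply_ne _ _ _ h, Matrix.map_apply, Matrix.sub_apply, Matrix.smul_apply,
      Matrix.one_apply_ne h]

lemma charpoly_map_frac (P : Matrix m m ℂ) :
    algebraMap (Polynomial ℂ) K P.charpoly =
      ((algebraMap (Polynomial ℂ) K X) • (1 : Matrix m m K)
        - P.map ((algebraMap (Polynomial ℂ) K).comp Polynomial.C)).det := by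
  rw [Matrix.charpoly, RingHom.map_det, RingHom.mapMatrix_apply, charmatrix_map_frac]

/-- Key identity : `charpoly (M*N) * X^|n| = charpoly (N*M) * X^|m|`. -/
theorem charpoly_mul_comm_pow (M : Matrix m n ℂ) (N : Matrix n m ℂ) :
    (M * N).charpoly * X ^ (Fintype.card n) = (N * M).charpoly * X ^ (Fintype.card m) := by
  apply IsFractionRing.injective (Polynomial ℂ) K
  set φ := algebraMap (Polynomial ℂ) K with hφdef
  have hx : φ X ≠ 0 := by
    simpa using (map_ne_zero_iff φ (IsFractionRing.injective (Polynomial ℂ) K)).2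
      (Polynomial.X_ne_zero)
  set x : K := φ X with hxdef
  set f := φ.comp (Polynomial.C : ℂ →+* Polynomial ℂ) with hfdef
  set M' : Matrix m n K := M.map f with hM'
  set N' : Matrix n m K := N.map f with hN'
  have hmapMN : (M * N).map f = M' * N' := by rw [Matrix.map_mul]
  have hmapNM : (N * M).map f = N' * M' := by rw [Matrix.map_mul]
  rw [_root_.map_mul, _root_.map_mul, map_pow, map_pow, charpoly_map_frac, charpoly_map_frac,
    hmapMN, hmapNM]
  -- now a pure identity in K
  letI : Invertible (x • (1 : Matrix m m K)) := by
    refine ⟨x⁻¹ • (1 : Matrix m m K), ?_, ?_⟩ <;>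
      simp [smul_smul, inv_mul_cancel₀ hx, mul_inv_cancel₀ hx]
  letI : Invertible (1 : Matrix n n K) := invertibleOne
  have h1 : (Matrix.fromBlocks (x • (1 : Matrix m m K)) M' N' (1 : Matrix n n K)).det
      = (x • (1 : Matrix m m K) - M' * N').det := by
    rw [Matrix.det_fromBlocks₂₂]
    simp
  have hinv : ⅟(x • (1 : Matrix m m K)) = x⁻¹ • (1 : Matrix m m K) := rfl
  have h2 : (Matrix.fromBlocks (x • (1 : Matrix m m K)) M' N' (1 : Matrix n n K)).det
      = x ^ (Fintype.card m) * ((1 : Matrix n n K) - x⁻¹ • (N' * M')).det := by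
    rw [Matrix.det_fromBlocks₁₁, hinv]
    congr 1
    · rw [Matrix.det_smul, Matrix.det_one, mul_one]
    · congr 1
      rw [Matrix.mul_smul, Matrix.mul_one, Matrix.smul_mul]
  have h3 : x ^ (Fintype.card n) * ((1 : Matrix n n K) - x⁻¹ • (N' * M')).det
      = (x • (1 : Matrix n n K) - N' * M').det := by
    rw [← Matrix.det_smul, smul_sub, smul_smul, mul_inv_cancel₀ hx, one_smul]
  calc (x • (1 : Matrix m m K) - M' * N').det * x ^ (Fintype.card n)
      = (x ^ (Fintype.card m) * ((1 : Matrix n n K) - x⁻¹ • (N' * M')).det)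
          * x ^ (Fintype.card n) := by rw [← h1, h2]
    _ = (x • (1 : Matrix n n K) - N' * M').det * x ^ (Fintype.card m) := by
        rw [mul_comm (x ^ (Fintype.card m)) _, mul_assoc, ← h3]; ring



variable {m n : Type*} [Fintype m] [Fintype n] [DecidableEq m] [DecidableEq n]

theorem charpoly_square_comm (M N : Matrix m m ℂ) :
    (M * N).charpoly = (N * M).charpoly := by
  have := charpoly_mul_comm_pow M N
  exact mul_right_cancel₀ (pow_ne_zero _ Polynomial.X_ne_zero) this

theorem charpoly_unitary_conj {U : Matrix m m ℂ} (hU : U ∈ Matrix.unitaryGroup m ℂ)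
    (D : Matrix m m ℂ) : (U * D * star U).charpoly = D.charpoly := by
  have h1 : U * D * star U = (U * D) * star U := by rw [Matrix.mul_assoc]
  rw [h1, charpoly_square_comm (U * D) (star U), ← Matrix.mul_assoc]
  have h2 : star U * U = 1 := (Matrix.mem_unitaryGroup_iff').mp hU
  rw [h2, Matrix.one_mul]

theorem charmatrix_diagonal (d : m → ℂ) :
    charmatrix (Matrix.diagonal d) = Matrix.diagonal (fun i => (X : ℂ[X]) - C (d i)) := by
  ext i j
  by_cases h : i = j
  · subst h; simp [charmatrix_apply_eq]
  · simp [charmatrix_apply_ne _ _ _ h, Matrix.diagonal_apply_ne _ h]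

theorem charpoly_diagonal (d : m → ℂ) :
    (Matrix.diagonal d).charpoly = ((Finset.univ.val.map d).map (fun a => (X : ℂ[X]) - C a)).prod := by
  rw [Matrix.charpoly, charmatrix_diagonal, Matrix.det_diagonal]
  rw [Finset.prod_eq_multiset_prod, Multiset.map_map]
  rfl

theorem roots_charpoly_diagonal (d : m → ℂ) :
    (Matrix.diagonal d).charpoly.roots = Finset.univ.val.map d := by
  rw [charpoly_diagonal, Polynomial.roots_multiset_prod_X_sub_C]

theorem charpoly_hermitian {M : Matrix m m ℂ} (hM : M.IsHermitian) :
    M.charpoly = (Matrix.diagonal (fun i => ((hM.eigenvalues i : ℝ) : ℂ))).charpoly := by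
  conv_lhs => rw [hM.spectral_theorem]
  rw [Unitary.conjStarAlgAut_apply]
  rw [charpoly_unitary_conj (hM.eigenvectorUnitary).2]
  rfl

theorem roots_charpoly_hermitian {M : Matrix m m ℂ} (hM : M.IsHermitian) :
    M.charpoly.roots = Finset.univ.val.map (fun i => ((hM.eigenvalues i : ℝ) : ℂ)) := by
  rw [charpoly_hermitian hM, roots_charpoly_diagonal]

/-- spectral sum used for entropy computations -/
noncomputable def rsum (M : Matrix m m ℂ) : ℝ :=
  (M.charpoly.roots.map fun z => z.re * Real.log z.re).sum

theorem rsum_hermitian {M : Matrix m m ℂ} (hM : M.IsHermitian) :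
    rsum M = ∑ i, (hM.eigenvalues i) * Real.log (hM.eigenvalues i) := by
  rw [rsum, roots_charpoly_hermitian hM, Multiset.map_map, Finset.sum]
  congr 1

theorem entropy_eq_neg_rsum {M : Matrix m m ℂ} (hM : M.IsHermitian) :
    QP.entropy M = - rsum M := by
  rw [QP.entropy, dif_pos hM, rsum_hermitian hM]

theorem rsum_congr_charpoly {M : Matrix m m ℂ} {N : Matrix n n ℂ} {k l : ℕ}
    (h : M.charpoly * X ^ k = N.charpoly * X ^ l) : rsum M = rsum N := by
  have hM0 : M.charpoly ≠ 0 := M.charpoly_monic.ne_zero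
  have hN0 : N.charpoly ≠ 0 := N.charpoly_monic.ne_zero
  have hX : (X : ℂ[X]) ^ k ≠ 0 := pow_ne_zero _ Polynomial.X_ne_zero
  have hX' : (X : ℂ[X]) ^ l ≠ 0 := pow_ne_zero _ Polynomial.X_ne_zero
  have h2 := congrArg Polynomial.roots h
  rw [Polynomial.roots_mul (mul_ne_zero hM0 hX), Polynomial.roots_mul (mul_ne_zero hN0 hX'),
    Polynomial.roots_X_pow, Polynomial.roots_X_pow] at h2
  have h3 := congrArg (fun s => (Multiset.map (fun z : ℂ => z.re * Real.log z.re) s).sum) h2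
  simpa [rsum, Multiset.map_nsmul, Multiset.sum_nsmul] using h3

theorem rsum_transpose (M : Matrix m m ℂ) : rsum Mᵀ = rsum M := by
  have h : Mᵀ.charpoly = M.charpoly := by
    rw [Matrix.charpoly, Matrix.charpoly, ← Matrix.det_transpose (charmatrix Mᵀ)]
    congr 1
    ext i j
    by_cases hij : i = j
    · subst hij; simp [charmatrix_apply_eq]
    · simp [Matrix.transpose_apply, charmatrix_apply_ne _ _ _ hij,
        charmatrix_apply_ne _ _ _ (Ne.symm hij)]
  unfold rsum; rw [h]

end QPaux

namespace QPaux

variable {m n : Type*} [Fintype m] [Fintype n] [DecidableEq m] [DecidableEq n]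

theorem rsum_diagonal_real (d : m → ℝ) :
    rsum (Matrix.diagonal (fun i => ((d i : ℝ) : ℂ))) = ∑ i, (d i) * Real.log (d i) := by
  rw [rsum, roots_charpoly_diagonal, Multiset.map_map, Finset.sum]
  congr 1

theorem isHermitian_diagonal_real (d : m → ℝ) :
    (Matrix.diagonal (fun i => ((d i : ℝ) : ℂ))).IsHermitian := by
  rw [Matrix.IsHermitian]
  ext i j
  by_cases h : i = j
  · subst h; simp [Complex.conj_ofReal]
  · simp [Matrix.conjTranspose_apply, Matrix.diagonal_apply_ne _ h,
      Matrix.diagonal_apply_ne _ (Ne.symm h)]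

theorem charpoly_blockDiagonal (M : n → Matrix m m ℂ) :
    (Matrix.blockDiagonal M).charpoly = ∏ i, (M i).charpoly := by
  have h : charmatrix (Matrix.blockDiagonal M)
      = Matrix.blockDiagonal (fun i => charmatrix (M i)) := by
    refine Matrix.ext fun x y => ?_
    obtain ⟨a, i⟩ := x
    obtain ⟨b, j⟩ := y
    by_cases hij : i = j
    · subst hij
      by_cases hab : a = b
      · subst hab; simp [charmatrix_apply_eq, Matrix.blockDiagonal_apply]
      · have : (a, i) ≠ (b, i) := by simp [hab]
        rw [charmatrix_apply_ne _ _ _ this]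
        simp [Matrix.blockDiagonal_apply, charmatrix_apply_ne _ _ _ hab]
    · have : (a, i) ≠ (b, j) := by simp [hij]
      rw [charmatrix_apply_ne _ _ _ this]
      simp [Matrix.blockDiagonal_apply, hij]
  rw [Matrix.charpoly, h, Matrix.det_blockDiagonal]
  rfl

theorem rsum_blockDiagonal (M : n → Matrix m m ℂ) :
    rsum (Matrix.blockDiagonal M) = ∑ i, rsum (M i) := by
  have h0 : ∀ i ∈ Finset.univ, (M i).charpoly ≠ 0 := fun i _ => (M i).charpoly_monic.ne_zero
  have hpne : (∏ i, (M i).charpoly) ≠ 0 := Finset.prod_ne_zero_iff.mpr h0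
  rw [rsum, charpoly_blockDiagonal, Polynomial.roots_prod _ _ hpne, Multiset.map_bind,
    Multiset.sum_bind, Finset.sum]
  congr 1

theorem isHermitian_blockDiagonal {M : n → Matrix m m ℂ} (h : ∀ i, (M i).IsHermitian) :
    (Matrix.blockDiagonal M).IsHermitian := by
  rw [Matrix.IsHermitian, Matrix.blockDiagonal_conjTranspose]
  exact congrArg _ (funext fun i => h i)

theorem plog_mul {x y : ℝ} (hx : 0 ≤ x) (hy : 0 ≤ y) :
    (x * y) * Real.log (x * y) = y * (x * Real.log x) + x * (y * Real.log y) := by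
  rcases eq_or_lt_of_le hx with h | h
  · simp [← h]
  rcases eq_or_lt_of_le hy with h' | h'
  · simp [← h']
  rw [Real.log_mul (ne_of_gt h) (ne_of_gt h')]
  ring

theorem sum_eigenvalues_eq_trace {M : Matrix m m ℂ} (hM : M.IsHermitian) :
    M.trace = ∑ i, ((hM.eigenvalues i : ℝ) : ℂ) := by
  conv_lhs => rw [hM.spectral_theorem]
  rw [Unitary.conjStarAlgAut_apply]
  rw [Matrix.trace_mul_comm, ← Matrix.mul_assoc]
  have h2 : (star (hM.eigenvectorUnitary : Matrix m m ℂ)) * (hM.eigenvectorUnitary : Matrix m m ℂ)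
      = 1 := (Matrix.mem_unitaryGroup_iff').mp (hM.eigenvectorUnitary).2
  rw [h2, Matrix.one_mul, Matrix.trace_diagonal]
  rfl

theorem rsum_real_smul {G : Matrix m m ℂ} (hG : G.PosSemidef) (htr : G.trace = 1)
    {c : ℝ} (hc : 0 ≤ c) :
    rsum ((c : ℂ) • G) = c * Real.log c + c * rsum G := by
  have hH : G.IsHermitian := hG.1
  have hdiag : (c : ℂ) • G = (hH.eigenvectorUnitary : Matrix m m ℂ)
      * Matrix.diagonal (fun i => (((c * hH.eigenvalues i : ℝ)) : ℂ))
      * star (hH.eigenvectorUnitary : Matrix m m ℂ) := by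
    conv_lhs => rw [hH.spectral_theorem]
    rw [Unitary.conjStarAlgAut_apply]
    rw [← Matrix.smul_mul, ← Matrix.mul_smul]
    congr 2
    ext i j
    by_cases h : i = j
    · subst h
      simp only [Matrix.smul_apply, Matrix.diagonal_apply_eq, Function.comp, smul_eq_mul]
      push_cast
      rfl
    · simp [Matrix.diagonal_apply_ne _ h]
  have hch : ((c : ℂ) • G).charpoly
      = (Matrix.diagonal (fun i => (((c * hH.eigenvalues i : ℝ)) : ℂ))).charpoly := by
    rw [hdiag, charpoly_unitary_conj (hH.eigenvectorUnitary).2]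
  have h1 : rsum ((c : ℂ) • G) = ∑ i, (c * hH.eigenvalues i) * Real.log (c * hH.eigenvalues i) := by
    rw [rsum, hch, ← rsum]
    exact rsum_diagonal_real _
  rw [h1]
  have h2 : ∀ i, (c * hH.eigenvalues i) * Real.log (c * hH.eigenvalues i)
      = hH.eigenvalues i * (c * Real.log c) + c * (hH.eigenvalues i * Real.log (hH.eigenvalues i)) :=
    fun i => plog_mul hc (hG.eigenvalues_nonneg i)
  rw [Finset.sum_congr rfl (fun i _ => h2 i), Finset.sum_add_distrib, ← Finset.sum_mul,
    ← Finset.mul_sum, rsum_hermitian hH]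
  have h3 : ∑ i, hH.eigenvalues i = 1 := by
    have := sum_eigenvalues_eq_trace hH
    rw [htr] at this
    have h4 : ((∑ i, hH.eigenvalues i : ℝ) : ℂ) = ((1 : ℝ) : ℂ) := by push_cast [← this]; rfl
    exact_mod_cast h4
  rw [h3, one_mul]

theorem entropy_submatrix_equiv {e : n ≃ m} {M : Matrix m m ℂ} (hM : M.IsHermitian) :
    QP.entropy (M.submatrix e e) = QP.entropy M := by
  have hsub : (M.submatrix e e).IsHermitian := hM.submatrix e
  rw [entropy_eq_neg_rsum hsub, entropy_eq_neg_rsum hM]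
  have hch : (M.submatrix e e).charpoly = M.charpoly := by
    have : M.submatrix e e = Matrix.reindex e.symm e.symm M := rfl
    rw [this, Matrix.charpoly_reindex]
  unfold rsum
  rw [hch]

end QPaux

open QPaux

/-- the flagged extension of `ρ = Σᵢ pᵢ |ψⁱ⟩⟨ψⁱ|` (with orthogonal `|ψⁱ⟩`)
is an extension with `(1/2) I(A:B|E') = Σᵢ pᵢ S(ρ_Aⁱ)`, hence `E_sq ≤ Σᵢ pᵢ S(ρ_Aⁱ)`. -/
theorem Esq_le_entanglement_of_formation
    {A B I : Type*} [Fintype A] [Fintype B] [Fintype I]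
    [DecidableEq A] [DecidableEq B] [DecidableEq I]
    (p : I → ℝ) (hp0 : ∀ i, 0 ≤ p i) (hp1 : ∑ i, p i = 1)
    (ψi : I → (A × B → ℂ)) (hψi : ∀ i, IsUnitVec (ψi i))
    (horth : ∀ i j, i ≠ j → ∑ z, star (ψi i z) * ψi j z = 0)
    (ρ : Matrix (A × B) (A × B) ℂ)
    (hρ : ρ = ∑ i, (p i : ℂ) • outer (ψi i))
    (σ : Matrix (A × B × I) (A × B × I) ℂ)
    (hσ : ∀ x y : A × B × I, σ x y =
      if x.2.2 = y.2.2
      then (p x.2.2 : ℂ) * ψi x.2.2 (x.1, x.2.1) * star (ψi x.2.2 (y.1, y.2.1))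
      else 0) :
    redAB σ = ρ ∧
    cmi σ / 2 = ∑ i, p i * entropy (ptraceR (outer (ψi i))) ∧
    Esq ρ ≤ ∑ i, p i * entropy (ptraceR (outer (ψi i))) := by
  classical
  -- matrices of the states
  set Mi : I → Matrix A B ℂ := fun i => Matrix.of (fun a b => ψi i (a, b)) with hMidef
  have hGdef : ∀ i, ptraceR (outer (ψi i)) = Mi i * (Mi i)ᴴ := by
    intro i
    ext a a'
    simp [ptraceR, outer, Matrix.mul_apply, Matrix.conjTranspose_apply, hMidef]
  have hunit : ∀ i, (∑ a, ∑ b, ψi i (a, b) * star (ψi i (a, b))) = (1 : ℂ) := by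
    intro i
    calc (∑ a, ∑ b, ψi i (a, b) * star (ψi i (a, b)))
        = ∑ x : A × B, ψi i x * star (ψi i x) :=
          (Fintype.sum_prod_type (fun x : A × B => ψi i x * star (ψi i x))).symm
      _ = ∑ x : A × B, ((Complex.normSq (ψi i x) : ℝ) : ℂ) := by
          refine Finset.sum_congr rfl fun x _ => ?_
          rw [show star (ψi i x) = (starRingEnd ℂ) (ψi i x) from rfl, Complex.mul_conj]
      _ = ((∑ x : A × B, Complex.normSq (ψi i x) : ℝ) : ℂ) := by push_cast; rfl
      _ = 1 := by rw [hψi i]; norm_num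
  have hGpsd : ∀ i, (Mi i * (Mi i)ᴴ).PosSemidef := fun i =>
    Matrix.posSemidef_self_mul_conjTranspose _
  have hGtr : ∀ i, (Mi i * (Mi i)ᴴ).trace = 1 := by
    intro i
    have h : (Mi i * (Mi i)ᴴ).trace = ∑ a, ∑ b, ψi i (a, b) * star (ψi i (a, b)) := by
      simp [Matrix.trace, Matrix.diag, Matrix.mul_apply, Matrix.conjTranspose_apply, hMidef]
    rw [h, hunit i]
  have hG'psd : ∀ i, ((Mi i)ᵀ * ((Mi i)ᵀ)ᴴ).PosSemidef := fun i =>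
    Matrix.posSemidef_self_mul_conjTranspose _
  have hG'tr : ∀ i, ((Mi i)ᵀ * ((Mi i)ᵀ)ᴴ).trace = 1 := by
    intro i
    have h : ((Mi i)ᵀ * ((Mi i)ᵀ)ᴴ).trace = ∑ b, ∑ a, ψi i (a, b) * star (ψi i (a, b)) := by
      simp [Matrix.trace, Matrix.diag, Matrix.mul_apply, Matrix.conjTranspose_apply, hMidef]
    rw [h, Finset.sum_comm, hunit i]
  -- σ = T Tᴴ
  set T : Matrix (A × B × I) I ℂ := Matrix.of (fun x i =>
    if x.2.2 = i then ((Real.sqrt (p i) : ℝ) : ℂ) * ψi i (x.1, x.2.1) else 0) with hTdef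
  have hsq : ∀ i, ((Real.sqrt (p i) : ℝ) : ℂ) * ((Real.sqrt (p i) : ℝ) : ℂ) = (p i : ℂ) := by
    intro i
    rw [← Complex.ofReal_mul, Real.mul_self_sqrt (hp0 i)]
  have hσT : σ = T * Tᴴ := by
    ext x y
    rw [hσ x y, Matrix.mul_apply]
    rw [Finset.sum_eq_single x.2.2]
    · by_cases h : x.2.2 = y.2.2
      · rw [if_pos h]
        simp only [hTdef, Matrix.of_apply, Matrix.conjTranspose_apply,
          show y.2.2 = x.2.2 from h.symm, eq_self_iff_true, if_true]
        rw [star_mul',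
          show star (((Real.sqrt (p x.2.2) : ℝ) : ℂ)) = ((Real.sqrt (p x.2.2) : ℝ) : ℂ) from
            Complex.conj_ofReal _, ← hsq x.2.2]
        ring
      · rw [if_neg h]
        simp only [hTdef, Matrix.of_apply, Matrix.conjTranspose_apply, eq_self_iff_true,
          if_true, if_neg (fun hyx : y.2.2 = x.2.2 => h hyx.symm)]
        rw [star_zero, mul_zero]
    · intro c _ hc
      simp only [hTdef, Matrix.of_apply, if_neg (fun h : x.2.2 = c => hc h.symm), zero_mul]
    · intro h
      exact absurd (Finset.mem_univ _) h
  have hTT : Tᴴ * T = Matrix.diagonal (fun i => ((p i : ℝ) : ℂ)) := by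
    ext i j
    rw [Matrix.mul_apply]
    by_cases h : i = j
    · subst h
      rw [Matrix.diagonal_apply_eq]
      have hterm : ∀ x : A × B × I, (Tᴴ) i x * T x i
          = if x.2.2 = i then (p i : ℂ) * (ψi i (x.1, x.2.1) * star (ψi i (x.1, x.2.1))) else 0 := by
        intro x
        simp only [hTdef, Matrix.conjTranspose_apply, Matrix.of_apply]
        by_cases hx : x.2.2 = i
        · simp only [hx, eq_self_iff_true, if_true]
          rw [star_mul',
            show star (((Real.sqrt (p i) : ℝ) : ℂ)) = ((Real.sqrt (p i) : ℝ) : ℂ) from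
              Complex.conj_ofReal _, ← hsq i]
          ring
        · simp [hx]
      rw [Finset.sum_congr rfl fun x _ => hterm x]
      simp only [Fintype.sum_prod_type]
      simp only [Finset.sum_ite_eq', Finset.mem_univ, if_true]
      rw [show (∑ a, ∑ b, (p i : ℂ) * (ψi i (a, b) * star (ψi i (a, b))))
          = (p i : ℂ) * ∑ a, ∑ b, (ψi i (a, b) * star (ψi i (a, b))) from by
            simp [Finset.mul_sum], hunit i, mul_one]
    · rw [Matrix.diagonal_apply_ne _ h]
      apply Finset.sum_eq_zero
      intro x _
      simp only [hTdef, Matrix.conjTranspose_apply, Matrix.of_apply]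
      by_cases hx : x.2.2 = i
      · rw [if_pos hx, if_neg (fun hxj : x.2.2 = j => h (hx.symm.trans hxj)), mul_zero]
      · rw [if_neg hx, star_zero, zero_mul]
  have hσPSD : σ.PosSemidef := by rw [hσT]; exact Matrix.posSemidef_self_mul_conjTranspose _
  have hσH : σ.IsHermitian := hσPSD.1
  -- reduced density matrices
  have hredAB : redAB σ = ρ := by
    ext x y
    obtain ⟨a, b⟩ := x
    obtain ⟨a', b'⟩ := y
    simp only [redAB, Matrix.of_apply, hρ, hσ, Matrix.sum_apply, Matrix.smul_apply, outer,
      smul_eq_mul]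
    refine Finset.sum_congr rfl fun c _ => ?_
    simp [mul_assoc]
  have hredC : redC σ = Matrix.diagonal (fun c => ((p c : ℝ) : ℂ)) := by
    ext c c'
    simp only [redC, Matrix.of_apply]
    by_cases h : c = c'
    · subst h
      rw [Matrix.diagonal_apply_eq]
      have hterm : ∀ a b, σ (a, b, c) (a, b, c)
          = (p c : ℂ) * (ψi c (a, b) * star (ψi c (a, b))) := by
        intro a b
        rw [hσ]
        simp [mul_assoc]
      calc (∑ a, ∑ b, σ (a, b, c) (a, b, c))
          = ∑ a, ∑ b, (p c : ℂ) * (ψi c (a, b) * star (ψi c (a, b))) :=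
            Finset.sum_congr rfl fun a _ => Finset.sum_congr rfl fun b _ => hterm a b
        _ = (p c : ℂ) * ∑ a, ∑ b, (ψi c (a, b) * star (ψi c (a, b))) := by
            simp [Finset.mul_sum]
        _ = ((p c : ℝ) : ℂ) := by rw [hunit c, mul_one]
    · rw [Matrix.diagonal_apply_ne _ h]
      apply Finset.sum_eq_zero
      intro a _
      apply Finset.sum_eq_zero
      intro b _
      rw [hσ]
      exact if_neg h
  have hredAC : redAC σ = Matrix.blockDiagonal (fun i => (p i : ℂ) • (Mi i * (Mi i)ᴴ)) := by
    refine Matrix.ext fun x y => ?_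
    obtain ⟨a, c⟩ := x
    obtain ⟨a', c'⟩ := y
    simp only [redAC, Matrix.of_apply, hσ, Matrix.blockDiagonal_apply, Matrix.smul_apply,
      smul_eq_mul]
    by_cases h : c = c'
    · subst h
      simp only [if_pos rfl]
      rw [Matrix.mul_apply, Finset.mul_sum]
      refine Finset.sum_congr rfl fun b _ => ?_
      simp [hMidef, Matrix.conjTranspose_apply, mul_assoc]
    · simp [h]
  have hredBC : redBC σ = Matrix.blockDiagonal (fun i => (p i : ℂ) • ((Mi i)ᵀ * ((Mi i)ᵀ)ᴴ)) := by
    refine Matrix.ext fun x y => ?_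
    obtain ⟨b, c⟩ := x
    obtain ⟨b', c'⟩ := y
    simp only [redBC, Matrix.of_apply, hσ, Matrix.blockDiagonal_apply, Matrix.smul_apply,
      smul_eq_mul]
    by_cases h : c = c'
    · subst h
      simp only [if_pos rfl]
      rw [Matrix.mul_apply, Finset.mul_sum]
      refine Finset.sum_congr rfl fun a _ => ?_
      simp [hMidef, Matrix.conjTranspose_apply, Matrix.transpose_apply, mul_assoc]
    · simp [h]
  -- hermitian blocks
  have hblockH : ∀ i, ((p i : ℂ) • (Mi i * (Mi i)ᴴ)).IsHermitian := by
    intro i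
    rw [Matrix.IsHermitian, Matrix.conjTranspose_smul, (hGpsd i).1]
    congr 1
    exact Complex.conj_ofReal _
  have hblockH' : ∀ i, ((p i : ℂ) • ((Mi i)ᵀ * ((Mi i)ᵀ)ᴴ)).IsHermitian := by
    intro i
    rw [Matrix.IsHermitian, Matrix.conjTranspose_smul, (hG'psd i).1]
    congr 1
    exact Complex.conj_ofReal _
  have hACH : (redAC σ).IsHermitian := by
    rw [hredAC]; exact isHermitian_blockDiagonal hblockH
  have hBCH : (redBC σ).IsHermitian := by
    rw [hredBC]; exact isHermitian_blockDiagonal hblockH'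
  have hCH : (redC σ).IsHermitian := by
    rw [hredC]; exact isHermitian_diagonal_real p
  -- the four entropies
  have hSA : ∀ i, entropy (ptraceR (outer (ψi i))) = - rsum (Mi i * (Mi i)ᴴ) := by
    intro i
    rw [hGdef i]
    exact entropy_eq_neg_rsum (hGpsd i).1
  have hrsum' : ∀ i, rsum ((Mi i)ᵀ * ((Mi i)ᵀ)ᴴ) = rsum (Mi i * (Mi i)ᴴ) := by
    intro i
    have h1 : rsum ((Mi i)ᵀ * ((Mi i)ᵀ)ᴴ) = rsum (((Mi i)ᵀ)ᴴ * (Mi i)ᵀ) :=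
      rsum_congr_charpoly (charpoly_mul_comm_pow _ _)
    have h2 : ((Mi i)ᵀ)ᴴ * (Mi i)ᵀ = (Mi i * (Mi i)ᴴ)ᵀ := by
      ext a a'
      simp only [Matrix.mul_apply, Matrix.conjTranspose_apply, Matrix.transpose_apply]
      exact Finset.sum_congr rfl fun b _ => mul_comm _ _
    rw [h1, h2, rsum_transpose]
  have hEC : entropy (redC σ) = -(∑ i, p i * Real.log (p i)) := by
    rw [hredC, entropy_eq_neg_rsum (isHermitian_diagonal_real p), rsum_diagonal_real]
  have hEσ : entropy σ = -(∑ i, p i * Real.log (p i)) := by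
    rw [entropy_eq_neg_rsum hσH]
    have h1 : rsum σ = rsum (Matrix.diagonal (fun i => ((p i : ℝ) : ℂ))) := by
      refine rsum_congr_charpoly (k := Fintype.card I) (l := Fintype.card (A × B × I)) ?_
      rw [hσT, ← hTT]
      exact charpoly_mul_comm_pow T Tᴴ
    rw [h1, rsum_diagonal_real]
  have hEAC : entropy (redAC σ)
      = -(∑ i, p i * Real.log (p i)) + ∑ i, p i * entropy (ptraceR (outer (ψi i))) := by
    rw [hredAC, entropy_eq_neg_rsum (isHermitian_blockDiagonal hblockH), rsum_blockDiagonal]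
    have h1 : ∀ i, rsum ((p i : ℂ) • (Mi i * (Mi i)ᴴ))
        = p i * Real.log (p i) + p i * rsum (Mi i * (Mi i)ᴴ) :=
      fun i => rsum_real_smul (hGpsd i) (hGtr i) (hp0 i)
    rw [Finset.sum_congr rfl fun i _ => h1 i, Finset.sum_add_distrib, neg_add]
    congr 1
    rw [← Finset.sum_neg_distrib]
    refine Finset.sum_congr rfl fun i _ => ?_
    rw [hSA i]
    ring
  have hEBC : entropy (redBC σ)
      = -(∑ i, p i * Real.log (p i)) + ∑ i, p i * entropy (ptraceR (outer (ψi i))) := by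
    rw [hredBC, entropy_eq_neg_rsum (isHermitian_blockDiagonal hblockH'), rsum_blockDiagonal]
    have h1 : ∀ i, rsum ((p i : ℂ) • ((Mi i)ᵀ * ((Mi i)ᵀ)ᴴ))
        = p i * Real.log (p i) + p i * rsum (Mi i * (Mi i)ᴴ) := by
      intro i
      rw [rsum_real_smul (hG'psd i) (hG'tr i) (hp0 i), hrsum' i]
    rw [Finset.sum_congr rfl fun i _ => h1 i, Finset.sum_add_distrib, neg_add]
    congr 1
    rw [← Finset.sum_neg_distrib]
    refine Finset.sum_congr rfl fun i _ => ?_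
    rw [hSA i]
    ring
  have hcmi2 : cmi σ / 2 = ∑ i, p i * entropy (ptraceR (outer (ψi i))) := by
    rw [QP.cmi, hEAC, hEBC, hEσ, hEC]
    ring
  refine ⟨hredAB, hcmi2, ?_⟩
  -- nonnegativity of the entropies
  have hSAnn : ∀ i, 0 ≤ entropy (ptraceR (outer (ψi i))) := by
    intro i
    rw [hGdef i, QP.entropy, dif_pos (hGpsd i).1, neg_nonneg]
    have hsum : (∑ k, ((hGpsd i).1).eigenvalues k) = 1 := by
      have h1 := sum_eigenvalues_eq_trace ((hGpsd i).1)
      rw [hGtr i] at h1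
      have h2 : ((∑ k, ((hGpsd i).1).eigenvalues k : ℝ) : ℂ) = ((1 : ℝ) : ℂ) := by
        push_cast [h1]; norm_num
      exact_mod_cast h2
    refine Finset.sum_nonpos fun j _ => ?_
    have h0 := (hGpsd i).eigenvalues_nonneg j
    have h1 : ((hGpsd i).1).eigenvalues j ≤ 1 := by
      rw [← hsum]
      exact Finset.single_le_sum (fun k _ => (hGpsd i).eigenvalues_nonneg k) (Finset.mem_univ j)
    exact mul_nonpos_of_nonneg_of_nonpos h0 (Real.log_nonpos h0 h1)
  -- transport to a Fin-indexed extension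
  set nI := Fintype.card I with hnI
  set e : I ≃ Fin nI := Fintype.equivFin I with hedef
  set E : (A × B × Fin nI) ≃ (A × B × I) :=
    (Equiv.refl A).prodCongr ((Equiv.refl B).prodCongr e.symm) with hEdef
  set σ' : Matrix (A × B × Fin nI) (A × B × Fin nI) ℂ := σ.submatrix E E with hσ'def
  have hσ'PSD : σ'.PosSemidef := hσPSD.submatrix E
  have hσ'tr : σ'.trace = 1 := by
    have h : σ'.trace = σ.trace := Fintype.sum_equiv E _ _ (fun x => rfl)
    rw [h, hσT]
    have htrσ : (T * Tᴴ).trace = Matrix.trace (Matrix.diagonal (fun i => ((p i : ℝ) : ℂ))) := by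
      rw [Matrix.trace_mul_comm, hTT]
    rw [htrσ, Matrix.trace_diagonal]
    have : (∑ i, ((p i : ℝ) : ℂ)) = ((∑ i, p i : ℝ) : ℂ) := by push_cast; rfl
    rw [this, hp1]
    norm_num
  have hAB' : redAB σ' = redAB σ := by
    ext x y
    simp only [redAB, Matrix.of_apply]
    exact Fintype.sum_equiv e.symm _ _ (fun c => rfl)
  have hentσ' : entropy σ' = entropy σ := entropy_submatrix_equiv hσH
  have hAC' : entropy (redAC σ') = entropy (redAC σ) := by
    have h : redAC σ' = (redAC σ).submatrix ((Equiv.refl A).prodCongr e.symm)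
        ((Equiv.refl A).prodCongr e.symm) := rfl
    rw [h]
    exact entropy_submatrix_equiv hACH
  have hBC' : entropy (redBC σ') = entropy (redBC σ) := by
    have h : redBC σ' = (redBC σ).submatrix ((Equiv.refl B).prodCongr e.symm)
        ((Equiv.refl B).prodCongr e.symm) := rfl
    rw [h]
    exact entropy_submatrix_equiv hBCH
  have hC' : entropy (redC σ') = entropy (redC σ) := by
    have h : redC σ' = (redC σ).submatrix e.symm e.symm := rfl
    rw [h]
    exact entropy_submatrix_equiv hCH
  have hcmi' : cmi σ' = cmi σ := by
    rw [QP.cmi, QP.cmi, hentσ', hAC', hBC', hC']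
  have hmem : (∑ i, p i * entropy (ptraceR (outer (ψi i)))) ∈
      { x : ℝ | ∃ (n : ℕ) (τ : Matrix (A × B × Fin n) (A × B × Fin n) ℂ),
        IsState τ ∧ redAB τ = ρ ∧ x = cmi τ / 2 } := by
    refine ⟨nI, σ', ⟨hσ'PSD, hσ'tr⟩, by rw [hAB', hredAB], ?_⟩
    rw [hcmi', hcmi2]
  rw [QP.Esq]
  by_cases hb : BddBelow { x : ℝ | ∃ (n : ℕ) (τ : Matrix (A × B × Fin n) (A × B × Fin n) ℂ),
      IsState τ ∧ redAB τ = ρ ∧ x = cmi τ / 2 }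
  · exact csInf_le hb hmem
  · rw [Real.sInf_of_not_bddBelow hb]
    exact Finset.sum_nonneg fun i _ => mul_nonneg (hp0 i) (hSAnn i)
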